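/- The function P(x,y,t) = (1/(2π D²(t−t₀)(1+(t−t₀)²/12)^{1/2})) · exp(−((y − x(t−t₀)/2)²/(2D²(t−t₀)(1+(t−t₀)²/12)) + x²/(2D²(t−t₀)))) satisfies the PDE ∂P/∂t + x ∂P/∂y = (D²/2)(∂²P/∂x² + ∂²P/∂y²) for all t > t₀. -/

import Mathlib

open Real

/-- The asymptotically self-similar Gaussian density of a particle diffusing in both
directions of a Couette flow. -/
noncomputable def shearDensity2 (D t₀ x y t : ℝ) : ℝ :=
  1 / (2 * Real.pi * D ^ 2 * (t - t₀) * Real.sqrt (1 + (t - t₀) ^ 2 / 12)) *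
    Real.exp (-((y - x * (t - t₀) / 2) ^ 2 /
        (2 * D ^ 2 * (t - t₀) * (1 + (t - t₀) ^ 2 / 12))
      + x ^ 2 / (2 * D ^ 2 * (t - t₀))))

set_option maxHeartbeats 2000000 in
theorem shearDensity2_satisfies_pde (D t₀ : ℝ) (hD : 0 < D) :
    ∀ x y t : ℝ, t₀ < t →
      deriv (fun s => shearDensity2 D t₀ x y s) t
        + x * deriv (fun y' => shearDensity2 D t₀ x y' t) y
      = D ^ 2 / 2 *
          (deriv (fun x' => deriv (fun x'' => shearDensity2 D t₀ x'' y t) x') x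
            + deriv (fun y' => deriv (fun y'' => shearDensity2 D t₀ x y'' t) y') y) := by
  intro x y t ht
  simp only [shearDensity2]
  have hτ0 : (0:ℝ) < t - t₀ := sub_pos.mpr ht
  set τ : ℝ := t - t₀ with hτdef
  set s : ℝ := 1 + τ ^ 2 / 12 with hsdef
  have hτpos : 0 < τ := hτ0
  have hs0 : 0 < s := by
    rw [hsdef]; positivity
  set R : ℝ := Real.sqrt s with hRdef
  have hR0 : 0 < R := Real.sqrt_pos.mpr hs0
  have hR2 : R ^ 2 = s := Real.sq_sqrt hs0.le
  rw [← hR2]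
  have hπ : Real.pi ≠ 0 := Real.pi_ne_zero
  have hD' : D ≠ 0 := hD.ne'
  have hτ' : τ ≠ 0 := hτpos.ne'
  have hR' : R ≠ 0 := hR0.ne'
  -- first derivative in y, at every point
  have hPy : ∀ y' : ℝ, HasDerivAt
      (fun y'' => 1 / (2 * Real.pi * D ^ 2 * τ * R) *
        Real.exp (-((y'' - x * τ / 2) ^ 2 / (2 * D ^ 2 * τ * R ^ 2)
          + x ^ 2 / (2 * D ^ 2 * τ))))
      (-((y' - x * τ / 2) / (D ^ 2 * τ * R ^ 2)) *
        (1 / (2 * Real.pi * D ^ 2 * τ * R) *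
          Real.exp (-((y' - x * τ / 2) ^ 2 / (2 * D ^ 2 * τ * R ^ 2)
            + x ^ 2 / (2 * D ^ 2 * τ))))) y' := by
    intro y'
    have h1 : HasDerivAt (fun y'' : ℝ => y'' - x * τ / 2) 1 y' :=
      (hasDerivAt_id y').sub_const _
    have h2 := ((h1.fun_pow 2).div_const (2 * D ^ 2 * τ * R ^ 2)).add_const
      (x ^ 2 / (2 * D ^ 2 * τ))
    have h3 := (h2.fun_neg.exp).const_mul (1 / (2 * Real.pi * D ^ 2 * τ * R))
    refine h3.congr_deriv ?_
    field_simp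
    ring
  -- first derivative in x, at every point
  have hPx : ∀ x' : ℝ, HasDerivAt
      (fun x'' => 1 / (2 * Real.pi * D ^ 2 * τ * R) *
        Real.exp (-((y - x'' * τ / 2) ^ 2 / (2 * D ^ 2 * τ * R ^ 2)
          + x'' ^ 2 / (2 * D ^ 2 * τ))))
      (((y - x' * τ / 2) / (2 * D ^ 2 * R ^ 2) - x' / (D ^ 2 * τ)) *
        (1 / (2 * Real.pi * D ^ 2 * τ * R) *
          Real.exp (-((y - x' * τ / 2) ^ 2 / (2 * D ^ 2 * τ * R ^ 2)
            + x' ^ 2 / (2 * D ^ 2 * τ))))) x' := by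
    intro x'
    have h1 : HasDerivAt (fun x'' : ℝ => y - x'' * τ / 2) (-(1 * τ / 2)) x' :=
      (((hasDerivAt_id x').mul_const τ).div_const 2).const_sub y
    have h2 := (h1.fun_pow 2).div_const (2 * D ^ 2 * τ * R ^ 2)
    have h3 := (hasDerivAt_pow 2 x').div_const (2 * D ^ 2 * τ)
    have h4 := (((h2.fun_add h3).fun_neg).exp).const_mul (1 / (2 * Real.pi * D ^ 2 * τ * R))
    refine h4.congr_deriv ?_
    field_simp
    ring
  -- first derivative in t, at t
  have hsq0 : (0:ℝ) < 1 + (t - t₀) ^ 2 / 12 := by positivity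
  have hne1 : 2 * D ^ 2 * (t - t₀) * (1 + (t - t₀) ^ 2 / 12) ≠ 0 := by
    have : (0:ℝ) < 2 * D ^ 2 * (t - t₀) * (1 + (t - t₀) ^ 2 / 12) :=
      mul_pos (mul_pos (by positivity) hτ0) hsq0
    exact this.ne'
  have hne2 : 2 * D ^ 2 * (t - t₀) ≠ 0 := (mul_pos (by positivity) hτ0).ne'
  have hne3 : 2 * Real.pi * D ^ 2 * (t - t₀) * Real.sqrt (1 + (t - t₀) ^ 2 / 12) ≠ 0 := by
    have : (0:ℝ) < 2 * Real.pi * D ^ 2 * (t - t₀) * Real.sqrt (1 + (t - t₀) ^ 2 / 12) :=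
      mul_pos (mul_pos (by positivity) hτ0) (Real.sqrt_pos.mpr hsq0)
    exact this.ne'
  have g1 : HasDerivAt (fun u : ℝ => u - t₀) 1 t := (hasDerivAt_id t).sub_const t₀
  have hsq : HasDerivAt (fun u : ℝ => 1 + (u - t₀) ^ 2 / 12)
      ((2 : ℕ) * (t - t₀) ^ 1 * 1 / 12) t := ((g1.fun_pow 2).div_const 12).const_add 1
  have hsqrt := hsq.sqrt hsq0.ne'
  have hden_t := (g1.const_mul (2 * Real.pi * D ^ 2)).fun_mul hsqrt
  have hA := (hasDerivAt_const t (1:ℝ)).fun_div hden_t hne3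
  have hu1 : HasDerivAt (fun u : ℝ => y - x * (u - t₀) / 2) (-(x * 1 / 2)) t :=
    (((g1.const_mul x).div_const 2).const_sub y)
  have hu2 := hu1.fun_pow 2
  have hd2 := (g1.const_mul (2 * D ^ 2)).fun_mul hsq
  have hfrac1 := hu2.fun_div hd2 hne1
  have hfrac2 := (hasDerivAt_const t (x ^ 2)).fun_div (g1.const_mul (2 * D ^ 2)) hne2
  have hexp := ((hfrac1.fun_add hfrac2).fun_neg).exp
  have hPt : HasDerivAt
      (fun u => 1 / (2 * Real.pi * D ^ 2 * (u - t₀) * Real.sqrt (1 + (u - t₀) ^ 2 / 12)) *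
        Real.exp (-((y - x * (u - t₀) / 2) ^ 2 /
            (2 * D ^ 2 * (u - t₀) * (1 + (u - t₀) ^ 2 / 12))
          + x ^ 2 / (2 * D ^ 2 * (u - t₀)))))
      ((1 / (2 * Real.pi * D ^ 2 * τ * R) *
          Real.exp (-((y - x * τ / 2) ^ 2 / (2 * D ^ 2 * τ * R ^ 2)
            + x ^ 2 / (2 * D ^ 2 * τ)))) *
        (-(1 / τ) - τ / (12 * R ^ 2) + (y - x * τ / 2) * x / (2 * D ^ 2 * τ * R ^ 2)
          + (y - x * τ / 2) ^ 2 * (R ^ 2 + τ ^ 2 / 6) / (2 * D ^ 2 * τ ^ 2 * R ^ 4)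
          + x ^ 2 / (2 * D ^ 2 * τ ^ 2))) t := by
    have h := hA.fun_mul hexp
    refine h.congr_deriv ?_
    beta_reduce
    rw [← hτdef, ← hsdef, ← hRdef, ← hR2]
    field_simp
    ring
  -- rewrite all four derivative expressions in the goal
  rw [hPt.deriv, (hPy y).deriv]
  have hyfun : (fun y' => deriv
      (fun y'' => 1 / (2 * Real.pi * D ^ 2 * τ * R) *
        Real.exp (-((y'' - x * τ / 2) ^ 2 / (2 * D ^ 2 * τ * R ^ 2)
          + x ^ 2 / (2 * D ^ 2 * τ)))) y')
      = fun y' => -((y' - x * τ / 2) / (D ^ 2 * τ * R ^ 2)) *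
        (1 / (2 * Real.pi * D ^ 2 * τ * R) *
          Real.exp (-((y' - x * τ / 2) ^ 2 / (2 * D ^ 2 * τ * R ^ 2)
            + x ^ 2 / (2 * D ^ 2 * τ)))) :=
    funext fun y' => (hPy y').deriv
  have hxfun : (fun x' => deriv
      (fun x'' => 1 / (2 * Real.pi * D ^ 2 * τ * R) *
        Real.exp (-((y - x'' * τ / 2) ^ 2 / (2 * D ^ 2 * τ * R ^ 2)
          + x'' ^ 2 / (2 * D ^ 2 * τ)))) x')
      = fun x' => ((y - x' * τ / 2) / (2 * D ^ 2 * R ^ 2) - x' / (D ^ 2 * τ)) *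
        (1 / (2 * Real.pi * D ^ 2 * τ * R) *
          Real.exp (-((y - x' * τ / 2) ^ 2 / (2 * D ^ 2 * τ * R ^ 2)
            + x' ^ 2 / (2 * D ^ 2 * τ)))) :=
    funext fun x' => (hPx x').deriv
  rw [hyfun, hxfun]
  have ha : HasDerivAt (fun y' : ℝ => -((y' - x * τ / 2) / (D ^ 2 * τ * R ^ 2)))
      (-(1 / (D ^ 2 * τ * R ^ 2))) y :=
    (((hasDerivAt_id y).sub_const _).div_const _).neg
  have hgx : HasDerivAt
      (fun x' : ℝ => (y - x' * τ / 2) / (2 * D ^ 2 * R ^ 2) - x' / (D ^ 2 * τ))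
      (-(1 * τ / 2) / (2 * D ^ 2 * R ^ 2) - 1 / (D ^ 2 * τ)) x :=
    (((((hasDerivAt_id x).mul_const τ).div_const 2).const_sub y).div_const
      (2 * D ^ 2 * R ^ 2)).sub ((hasDerivAt_id x).div_const (D ^ 2 * τ))
  rw [(ha.fun_mul (hPy y)).deriv, (hgx.fun_mul (hPx x)).deriv]
  have hRrel : R ^ 2 = 1 + τ ^ 2 / 12 := by rw [hR2, hsdef]
  linear_combination (norm := (field_simp; ring))
    ((1 / (2 * Real.pi * D ^ 2 * τ * R) *
        Real.exp (-((y - x * τ / 2) ^ 2 / (2 * D ^ 2 * τ * R ^ 2)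
          + x ^ 2 / (2 * D ^ 2 * τ)))) *
      ((y - x * τ / 2) ^ 2 / (2 * D ^ 2 * τ ^ 2 * R ^ 4) - 1 / (2 * τ * R ^ 2))) * hRrel
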